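/- Let G = (V,E) be finite undirected, V = L ∪ F disjoint, and suppose S ⊆ L is such that w(G[(V\S) ∪ {u}]) = w(G[V\S]) for some u ∈ S. Then w^L(G[V\S]) = w^L(G[(V\S) ∪ {u}]). -/

import Mathlib

set_option linter.unusedSectionVars false
set_option linter.unusedVariables false

variable {V : Type*} [Fintype V] [DecidableEq V]

/-- A matching of `G` all of whose edges lie inside the vertex set `W`
(i.e. a matching of the induced subgraph `G[W]`). -/
def IsMatchingOn (G : SimpleGraph V) (W : Set V) (M : Finset (Sym2 V)) : Prop :=
  (∀ e ∈ M, e ∈ G.edgeSet) ∧ (∀ e ∈ M, ∀ v ∈ e, v ∈ W) ∧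
  (M : Set (Sym2 V)).Pairwise fun e f => ∀ v, v ∈ e → v ∉ f

/-- Vertices covered by a set of edges. -/
def mcovered (M : Finset (Sym2 V)) : Set V := {v | ∃ e ∈ M, v ∈ e}

/-- `w(G[W])`: maximum cardinality of a matching of `G[W]`. -/
noncomputable def mmax (G : SimpleGraph V) (W : Set V) : ℕ :=
  sSup {n | ∃ M, IsMatchingOn G W M ∧ M.card = n}

/-- `w^L(G[W])`: minimum number of `L`-vertices covered over maximum matchings of `G[W]`. -/
noncomputable def mwL (G : SimpleGraph V) (L W : Set V) : ℕ :=
  sInf {k | ∃ M, IsMatchingOn G W M ∧ M.card = mmax G W ∧ (mcovered M ∩ L).ncard = k}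

lemma IsMatchingOn.subset {G : SimpleGraph V} {W : Set V} {M N : Finset (Sym2 V)}
    (h : IsMatchingOn G W M) (hNM : N ⊆ M) : IsMatchingOn G W N :=
  ⟨fun e he => h.1 e (hNM he), fun e he => h.2.1 e (hNM he),
   h.2.2.mono (by exact_mod_cast hNM)⟩

lemma IsMatchingOn.eq_of_mem {G : SimpleGraph V} {W : Set V} {M : Finset (Sym2 V)}
    (h : IsMatchingOn G W M) {e f : Sym2 V} (he : e ∈ M) (hf : f ∈ M)
    {v : V} (hv : v ∈ e) (hv' : v ∈ f) : e = f := by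
  by_contra hne
  exact h.2.2 (by exact_mod_cast he) (by exact_mod_cast hf) hne v hv hv'

set_option linter.unusedSectionVars false
lemma IsMatchingOn.insertEdge {G : SimpleGraph V} {W : Set V} {M : Finset (Sym2 V)}
    (h : IsMatchingOn G W M) {e : Sym2 V} (he : e ∈ G.edgeSet)
    (heW : ∀ v ∈ e, v ∈ W) (hdis : ∀ v ∈ e, v ∉ mcovered M) :
    IsMatchingOn G W (insert e M) := by
  refine ⟨?_, ?_, ?_⟩
  · intro f hf; rcases Finset.mem_insert.1 hf with rfl | hf
    · exact he
    · exact h.1 f hf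
  · intro f hf; rcases Finset.mem_insert.1 hf with rfl | hf
    · exact heW
    · exact h.2.1 f hf
  · have : ((insert e M : Finset (Sym2 V)) : Set (Sym2 V)) = insert e (M : Set (Sym2 V)) := by
      simp
    rw [this]
    have hsym : Std.Symm (fun e f : Sym2 V => ∀ v, v ∈ e → v ∉ f) := by
      refine ⟨?_⟩
      intro a b hab v hv hv'
      exact hab v hv' hv
    refine Set.pairwise_insert_of_symm.2 ⟨h.2.2, ?_⟩
    · intro f hf _ v hv hv'
      exact hdis v hv ⟨f, by exact_mod_cast hf, hv'⟩

lemma mcovered_mono {M N : Finset (Sym2 V)} (h : M ⊆ N) : mcovered M ⊆ mcovered N := by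
  rintro v ⟨e, he, hv⟩; exact ⟨e, h he, hv⟩

lemma mcovered_erase {G : SimpleGraph V} {W : Set V} {M : Finset (Sym2 V)}
    (h : IsMatchingOn G W M) {e : Sym2 V} (he : e ∈ M) :
    mcovered (M.erase e) = mcovered M \ {v | v ∈ e} := by
  ext w
  constructor
  · rintro ⟨f, hf, hw⟩
    refine ⟨⟨f, Finset.mem_of_mem_erase hf, hw⟩, ?_⟩
    intro hwe
    exact (Finset.ne_of_mem_erase hf) (h.eq_of_mem (Finset.mem_of_mem_erase hf) he hw hwe)
  · rintro ⟨⟨f, hf, hw⟩, hwe⟩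
    refine ⟨f, Finset.mem_erase.2 ⟨?_, hf⟩, hw⟩
    rintro rfl; exact hwe hw

lemma mmax_bdd (G : SimpleGraph V) (W : Set V) :
    BddAbove {n | ∃ M, IsMatchingOn G W M ∧ M.card = n} := by
  refine ⟨Fintype.card (Sym2 V), ?_⟩
  rintro n ⟨M, _, rfl⟩
  exact Finset.card_le_univ M

lemma exists_mmax (G : SimpleGraph V) (W : Set V) :
    ∃ M, IsMatchingOn G W M ∧ M.card = mmax G W := by
  have hne : {n | ∃ M, IsMatchingOn G W M ∧ M.card = n}.Nonempty :=
    ⟨0, ∅, ⟨by simp, by simp, by simp⟩, by simp⟩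
  have := Nat.sSup_mem hne (mmax_bdd G W)
  obtain ⟨M, hM, hc⟩ := this
  exact ⟨M, hM, hc⟩

lemma le_mmax {G : SimpleGraph V} {W : Set V} {M : Finset (Sym2 V)}
    (h : IsMatchingOn G W M) : M.card ≤ mmax G W :=
  le_csSup (mmax_bdd G W) ⟨M, h, rfl⟩

lemma exists_mwL (G : SimpleGraph V) (L W : Set V) :
    ∃ M, IsMatchingOn G W M ∧ M.card = mmax G W ∧ (mcovered M ∩ L).ncard = mwL G L W := by
  have hne : {k | ∃ M, IsMatchingOn G W M ∧ M.card = mmax G W ∧ (mcovered M ∩ L).ncard = k}.Nonempty := by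
    obtain ⟨M, hM, hc⟩ := exists_mmax G W
    exact ⟨_, M, hM, hc, rfl⟩
  exact Nat.sInf_mem hne

lemma mwL_le {G : SimpleGraph V} {L W : Set V} {M : Finset (Sym2 V)}
    (h : IsMatchingOn G W M) (hc : M.card = mmax G W) :
    mwL G L W ≤ (mcovered M ∩ L).ncard :=
  Nat.sInf_le ⟨M, h, hc, rfl⟩

lemma mcovered_insert (e : Sym2 V) (M : Finset (Sym2 V)) :
    mcovered (insert e M) = {w | w ∈ e} ∪ mcovered M := by
  ext w
  simp only [mcovered, Set.mem_union, Set.mem_setOf_eq, Finset.mem_insert]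
  constructor
  · rintro ⟨f, (rfl | hf), hw⟩
    · exact Or.inl hw
    · exact Or.inr ⟨f, hf, hw⟩
  · rintro (hw | ⟨f, hf, hw⟩)
    · exact ⟨e, Or.inl rfl, hw⟩
    · exact ⟨f, Or.inr hf, hw⟩

lemma sym2_setOf (a b : V) : {w : V | w ∈ s(a, b)} = {a, b} := by
  ext w
  simp [Sym2.mem_iff]


lemma key (G : SimpleGraph V) (W : Set V) :
    ∀ n (A : Finset (Sym2 V)), A.card = n → ∀ (B : Finset (Sym2 V)),
    IsMatchingOn G W A → IsMatchingOn G W B →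
    (∀ N, IsMatchingOn G W N → N.card ≤ B.card) →
    ∀ u, u ∈ mcovered A → u ∉ mcovered B →
    ∃ C x, IsMatchingOn G W C ∧ C.card = A.card ∧
      mcovered C = (mcovered A \ {u}) ∪ {x} ∧ x ∉ mcovered A ∧
      (∀ g ∈ B, x ∈ g → ∀ y ∈ g, y ≠ x → y ∈ mcovered C) := by
  intro n
  induction n using Nat.strong_induction_on with
  | _ n ih =>
  intro A hcardA B hA hB hBmax u huA huB
  obtain ⟨e, heA, hue⟩ := huA
  obtain ⟨v, hev⟩ : ∃ v, e = s(u, v) := ⟨Sym2.Mem.other hue, (Sym2.other_spec hue).symm⟩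
  have hveq : v ∈ e := by rw [hev]; exact Sym2.mem_mk_right u v
  have huv : u ≠ v := by
    have := G.not_isDiag_of_mem_edgeSet (hA.1 e heA)
    rw [hev] at this
    simpa using this
  have hcovA_erase : mcovered (A.erase e) = mcovered A \ {w | w ∈ e} :=
    mcovered_erase hA heA
  have huAe : u ∉ mcovered (A.erase e) := by
    rw [hcovA_erase]; rintro ⟨-, hne⟩; exact hne hue
  have hvAe : v ∉ mcovered (A.erase e) := by
    rw [hcovA_erase]; rintro ⟨-, hne⟩; exact hne hveq
  by_cases hvB : v ∈ mcovered B
  · -- v is covered by B via f = s(v, x)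
    obtain ⟨f, hfB, hvf⟩ := hvB
    obtain ⟨x, hfx⟩ : ∃ x, f = s(v, x) := ⟨Sym2.Mem.other hvf, (Sym2.other_spec hvf).symm⟩
    have hxf : x ∈ f := by rw [hfx]; exact Sym2.mem_mk_right v x
    have hvx : v ≠ x := by
      have := G.not_isDiag_of_mem_edgeSet (hB.1 f hfB)
      rw [hfx] at this
      simpa using this
    have hxu : x ≠ u := by rintro rfl; exact huB ⟨f, hfB, hxf⟩
    have hef : e ≠ f := by
      rintro rfl; rw [hev] at hxf
      rcases Sym2.mem_iff.1 hxf with h1 | h1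
      · exact hxu h1
      · exact hvx h1.symm
    have heB : e ∉ B := by
      intro heB
      exact hef (hB.eq_of_mem heB hfB hveq hvf)
    have hxee : x ∉ {w : V | w ∈ e} := by
      intro hxe
      rw [hev] at hxe
      rcases Sym2.mem_iff.1 hxe with h1 | h1
      · exact hxu h1
      · exact hvx h1.symm
    have hvA : v ∈ mcovered A := ⟨e, heA, hveq⟩
    have hApos : 0 < A.card := Finset.card_pos.2 ⟨e, heA⟩
    have hAec : (A.erase e).card = A.card - 1 := Finset.card_erase_of_mem heA
    by_cases hxA : x ∈ mcovered (A.erase e)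
    · -- recursive case
      have hA' : IsMatchingOn G W (A.erase e) := hA.subset (Finset.erase_subset e A)
      have hcovB_erase : mcovered (B.erase f) = mcovered B \ {w | w ∈ f} :=
        mcovered_erase hB hfB
      have hB'm : IsMatchingOn G W (insert e (B.erase f)) := by
        refine (hB.subset (Finset.erase_subset f B)).insertEdge (hA.1 e heA) (hA.2.1 e heA) ?_
        intro w hw
        rw [hev] at hw
        rcases Sym2.mem_iff.1 hw with rfl | rfl
        · exact fun hc => huB (mcovered_mono (Finset.erase_subset f B) hc)
        · rw [hcovB_erase]
          rintro ⟨-, hne⟩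
          exact hne hvf
      have heBe : e ∉ B.erase f := fun hc => heB (Finset.mem_of_mem_erase hc)
      have hBpos : 0 < B.card := Finset.card_pos.2 ⟨f, hfB⟩
      have hcardB' : (insert e (B.erase f)).card = B.card := by
        rw [Finset.card_insert_of_notMem heBe, Finset.card_erase_of_mem hfB]
        omega
      have hB'max : ∀ N, IsMatchingOn G W N → N.card ≤ (insert e (B.erase f)).card := by
        intro N hN
        rw [hcardB']
        exact hBmax N hN
      have hxB' : x ∉ mcovered (insert e (B.erase f)) := by
        rintro ⟨g, hg, hxg⟩
        rcases Finset.mem_insert.1 hg with rfl | hg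
        · exact hxee hxg
        · exact (Finset.ne_of_mem_erase hg)
            (hB.eq_of_mem (Finset.mem_of_mem_erase hg) hfB hxg hxf)
      have hlt : (A.erase e).card < n := by omega
      obtain ⟨C', x', hC', hcC', hcovC', hx'A', hprop'⟩ :=
        ih _ hlt (A.erase e) rfl (insert e (B.erase f)) hA' hB'm hB'max x hxA hxB'
      have hx'x : x' ≠ x := by rintro rfl; exact hx'A' hxA
      have hx'v : x' ≠ v := by
        rintro rfl
        have hu' : u ∈ mcovered C' :=
          hprop' e (Finset.mem_insert_self e _) hveq u hue huv
        rw [hcovC'] at hu'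
        rcases hu' with h1 | h1
        · exact huAe h1.1
        · exact huv h1
      have hx'u : x' ≠ u := by
        rintro rfl
        have hv' : v ∈ mcovered C' :=
          hprop' e (Finset.mem_insert_self e _) hue v hveq (Ne.symm huv)
        rw [hcovC'] at hv'
        rcases hv' with h1 | h1
        · exact hvAe h1.1
        · exact huv h1.symm
      have hvC' : v ∉ mcovered C' := by
        rw [hcovC']
        rintro (h1 | h1)
        · exact hvAe h1.1
        · exact hx'v h1.symm
      have hxC' : x ∉ mcovered C' := by
        rw [hcovC']
        rintro (h1 | h1)
        · exact h1.2 rfl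
        · exact hx'x h1.symm
      have hCm : IsMatchingOn G W (insert f C') := by
        refine hC'.insertEdge (hB.1 f hfB) (hB.2.1 f hfB) ?_
        intro w hw
        rw [hfx] at hw
        rcases Sym2.mem_iff.1 hw with rfl | rfl
        · exact hvC'
        · exact hxC'
      have hfC' : f ∉ C' := fun hc => hvC' ⟨f, hc, hvf⟩
      refine ⟨insert f C', x', hCm, ?_, ?_, ?_, ?_⟩
      · rw [Finset.card_insert_of_notMem hfC', hcC', hAec]
        omega
      · rw [mcovered_insert, hcovC', hcovA_erase, hev, hfx, sym2_setOf, sym2_setOf]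
        have hxAc : x ∈ mcovered A := mcovered_mono (Finset.erase_subset e A) hxA
        ext w
        simp only [Set.mem_union, Set.mem_diff, Set.mem_insert_iff, Set.mem_singleton_iff]
        constructor
        · rintro ((rfl | rfl) | (⟨⟨hw1, hw2⟩, hw3⟩ | rfl))
          · exact Or.inl ⟨hvA, Ne.symm huv⟩
          · exact Or.inl ⟨hxAc, hxu⟩
          · exact Or.inl ⟨hw1, fun hc => hw2 (Or.inl hc)⟩
          · exact Or.inr rfl
        · rintro (⟨hw1, hw2⟩ | rfl)
          · by_cases hwv : w = v
            · exact Or.inl (Or.inl hwv)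
            · by_cases hwx : w = x
              · exact Or.inl (Or.inr hwx)
              · exact Or.inr (Or.inl ⟨⟨hw1, by tauto⟩, hwx⟩)
          · exact Or.inr (Or.inr rfl)
      · intro hc
        apply hx'A'
        rw [hcovA_erase]
        refine ⟨hc, ?_⟩
        intro hce
        rw [hev] at hce
        rcases Sym2.mem_iff.1 hce with h1 | h1
        · exact hx'u h1
        · exact hx'v h1
      · intro g hgB hx'g y hyg hyx'
        have hgf : g ≠ f := by
          rintro rfl
          rw [hfx] at hx'g
          rcases Sym2.mem_iff.1 hx'g with h1 | h1
          · exact hx'v h1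
          · exact hx'x h1
        have hgB' : g ∈ insert e (B.erase f) :=
          Finset.mem_insert_of_mem (Finset.mem_erase.2 ⟨hgf, hgB⟩)
        exact mcovered_mono (Finset.subset_insert f C') (hprop' g hgB' hx'g y hyg hyx')
    · -- base case: x is not covered by A.erase e
      have hA' : IsMatchingOn G W (A.erase e) := hA.subset (Finset.erase_subset e A)
      have hxAc : x ∉ mcovered A := by
        intro hc
        apply hxA
        rw [hcovA_erase]
        exact ⟨hc, hxee⟩
      have hCm : IsMatchingOn G W (insert f (A.erase e)) := by
        refine hA'.insertEdge (hB.1 f hfB) (hB.2.1 f hfB) ?_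
        intro w hw
        rw [hfx] at hw
        rcases Sym2.mem_iff.1 hw with rfl | rfl
        · exact hvAe
        · exact hxA
      have hfAe : f ∉ A.erase e := fun hc => hvAe ⟨f, hc, hvf⟩
      refine ⟨insert f (A.erase e), x, hCm, ?_, ?_, hxAc, ?_⟩
      · rw [Finset.card_insert_of_notMem hfAe, hAec]
        omega
      · rw [mcovered_insert, hcovA_erase, hev, hfx, sym2_setOf, sym2_setOf]
        ext w
        simp only [Set.mem_union, Set.mem_diff, Set.mem_insert_iff, Set.mem_singleton_iff]
        constructor
        · rintro ((rfl | rfl) | ⟨hw1, hw2⟩)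
          · exact Or.inl ⟨hvA, Ne.symm huv⟩
          · exact Or.inr rfl
          · exact Or.inl ⟨hw1, fun hc => hw2 (Or.inl hc)⟩
        · rintro (⟨hw1, hw2⟩ | rfl)
          · by_cases hwv : w = v
            · exact Or.inl (Or.inl hwv)
            · exact Or.inr ⟨hw1, by tauto⟩
          · exact Or.inl (Or.inr rfl)
      · intro g hgB hxg y hyg hyx
        have hgf : g = f := hB.eq_of_mem hgB hfB hxg hxf
        have hyg' : y ∈ s(v, x) := by rw [← hfx, ← hgf]; exact hyg
        rcases Sym2.mem_iff.1 hyg' with rfl | rfl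
        · exact ⟨f, Finset.mem_insert_self f _, hvf⟩
        · exact absurd rfl hyx
  · -- v not covered by B : contradiction with maximality of B
    exfalso
    have hmat : IsMatchingOn G W (insert e B) := by
      refine hB.insertEdge (hA.1 e heA) (hA.2.1 e heA) ?_
      intro w hw
      rw [hev] at hw
      rcases Sym2.mem_iff.1 hw with rfl | rfl
      · exact huB
      · exact hvB
    have hcard : (insert e B).card = B.card + 1 := by
      rw [Finset.card_insert_of_notMem]
      intro heB; exact huB ⟨e, heB, hue⟩
    have := hBmax _ hmat
    omega

/-- if adding `u ∈ S` does not increase the maximum matching size,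
the worst-case leader coverage is unchanged. -/
theorem stmt13 (G : SimpleGraph V) (L F S : Set V)
    (hpart : L ∪ F = Set.univ) (hdisj : Disjoint L F) (hS : S ⊆ L)
    (u : V) (hu : u ∈ S)
    (h : mmax G (Sᶜ ∪ {u}) = mmax G Sᶜ) :
    mwL G L Sᶜ = mwL G L (Sᶜ ∪ {u}) := by
  have huSc : u ∉ Sᶜ := by simpa using hu
  have hsub : Sᶜ ⊆ Sᶜ ∪ {u} := Set.subset_union_left
  have matW' : ∀ M, IsMatchingOn G Sᶜ M → IsMatchingOn G (Sᶜ ∪ {u}) M :=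
    fun M hM => ⟨hM.1, fun e he v hv => hsub (hM.2.1 e he v hv), hM.2.2⟩
  apply le_antisymm
  · -- mwL Sᶜ ≤ mwL (Sᶜ ∪ {u})
    obtain ⟨M, hM, hMc, hMk⟩ := exists_mwL G L (Sᶜ ∪ {u})
    by_cases huM : u ∈ mcovered M
    · obtain ⟨B₀, hB0, hB0c⟩ := exists_mmax G Sᶜ
      have hB0' : IsMatchingOn G (Sᶜ ∪ {u}) B₀ := matW' _ hB0
      have hB0max : ∀ N, IsMatchingOn G (Sᶜ ∪ {u}) N → N.card ≤ B₀.card := by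
        intro N hN
        rw [hB0c, ← h]
        exact le_mmax hN
      have huB0 : u ∉ mcovered B₀ := by
        rintro ⟨e, he, hue⟩
        exact huSc (hB0.2.1 e he u hue)
      obtain ⟨C, x, hC, hCc, hCcov, hxA, -⟩ :=
        key G (Sᶜ ∪ {u}) M.card M rfl B₀ hM hB0' hB0max u huM huB0
      have hxu : x ≠ u := by rintro rfl; exact hxA huM
      have huC : u ∉ mcovered C := by
        rw [hCcov]
        rintro (h1 | h1)
        · exact h1.2 rfl
        · exact hxu h1.symm
      have hCSc : IsMatchingOn G Sᶜ C := by
        refine ⟨hC.1, ?_, hC.2.2⟩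
        intro e he w hw
        rcases hC.2.1 e he w hw with hw' | hw'
        · exact hw'
        · exact absurd (show w ∈ mcovered C from ⟨e, he, hw⟩)
            (by rw [Set.mem_singleton_iff.1 hw']; exact huC)
      have hCcard : C.card = mmax G Sᶜ := by rw [hCc, hMc, h]
      have hsubC : mcovered C ∩ L ⊆ ((mcovered M ∩ L) \ {u}) ∪ {x} := by
        rintro w ⟨hwC, hwL⟩
        rw [hCcov] at hwC
        rcases hwC with h1 | h1
        · exact Or.inl ⟨⟨h1.1, hwL⟩, h1.2⟩
        · exact Or.inr h1
      have hcount : (mcovered C ∩ L).ncard ≤ (mcovered M ∩ L).ncard := by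
        calc (mcovered C ∩ L).ncard
            ≤ (((mcovered M ∩ L) \ {u}) ∪ {x}).ncard :=
              Set.ncard_le_ncard hsubC (Set.toFinite _)
          _ ≤ ((mcovered M ∩ L) \ {u}).ncard + ({x} : Set V).ncard :=
              Set.ncard_union_le _ _
          _ = ((mcovered M ∩ L) \ {u}).ncard + 1 := by rw [Set.ncard_singleton]
          _ = (mcovered M ∩ L).ncard :=
              Set.ncard_diff_singleton_add_one ⟨huM, hS hu⟩ (Set.toFinite _)
      calc mwL G L Sᶜ ≤ (mcovered C ∩ L).ncard := mwL_le hCSc hCcard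
        _ ≤ (mcovered M ∩ L).ncard := hcount
        _ = mwL G L (Sᶜ ∪ {u}) := hMk
    · have hMSc : IsMatchingOn G Sᶜ M := by
        refine ⟨hM.1, ?_, hM.2.2⟩
        intro e he w hw
        rcases hM.2.1 e he w hw with hw' | hw'
        · exact hw'
        · exact absurd (show w ∈ mcovered M from ⟨e, he, hw⟩)
            (by rw [Set.mem_singleton_iff.1 hw']; exact huM)
      rw [← hMk]
      exact mwL_le hMSc (by rw [hMc, h])
  · obtain ⟨M, hM, hMc, hMk⟩ := exists_mwL G L Sᶜ
    rw [← hMk]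
    exact mwL_le (matW' M hM) (by rw [hMc, ← h])
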